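/- Let σ be a finite nonempty type, w : σ → ℤ a weight function with w s ≠ 0 for all s, and r an integer. In MvPolynomial ℝ σ, for k : ℕ let P k be the ℝ-span of the monomials with exponent d : σ →₀ ℕ satisfying Σ_s (w s) * (d s) = r and Σ_{s : w s > 0} (w s) * (d s) ≥ k, and let Q l be the ℝ-span of the monomials with exponent d satisfying Σ_s (w s) * (d s) = r and Σ_s d s ≥ l. Then there exist functions L : ℕ → ℕ and K : ℕ → ℕ with L k → ∞ and K l → ∞ such that P k ⊆ Q (L k) for all k and Q l ⊆ P (K l) for all l. In particular the two filtrations (P k) and (Q l) of the weight-r component are equivalent. -/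

import Mathlib

open Finset MvPolynomial

theorem stmt_2 (σ : Type) [Fintype σ] [Nonempty σ] (w : σ → ℤ) (hw : ∀ s, w s ≠ 0) (r : ℤ)
    (P Q : ℕ → Submodule ℝ (MvPolynomial σ ℝ))
    (hP : ∀ k : ℕ, P k = Submodule.span ℝ
      {f : MvPolynomial σ ℝ | ∃ d : σ →₀ ℕ,
        (∑ s, w s * (d s : ℤ)) = r ∧
        (k : ℤ) ≤ (∑ s ∈ Finset.univ.filter (fun s => 0 < w s), w s * (d s : ℤ)) ∧
        f = MvPolynomial.monomial d (1 : ℝ)})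
    (hQ : ∀ l : ℕ, Q l = Submodule.span ℝ
      {f : MvPolynomial σ ℝ | ∃ d : σ →₀ ℕ,
        (∑ s, w s * (d s : ℤ)) = r ∧
        l ≤ (∑ s, d s) ∧
        f = MvPolynomial.monomial d (1 : ℝ)}) :
    ∃ L K : ℕ → ℕ,
      Filter.Tendsto L Filter.atTop Filter.atTop ∧
      Filter.Tendsto K Filter.atTop Filter.atTop ∧
      (∀ k, P k ≤ Q (L k)) ∧ (∀ l, Q l ≤ P (K l)) := by
  classical
  set W : ℕ := 1 + Finset.univ.sup (fun s => (w s).natAbs) with hWdef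
  have hWpos : 0 < W := by omega
  have hWbound : ∀ s : σ, (w s).natAbs ≤ W := by
    intro s
    have h := Finset.le_sup (f := fun s => (w s).natAbs) (Finset.mem_univ s)
    omega
  refine ⟨fun k => k / W, fun l => ((l : ℤ) + r) / 2 |>.toNat, ?_, ?_, ?_, ?_⟩
  · rw [Filter.tendsto_atTop]
    intro b
    rw [Filter.eventually_atTop]
    refine ⟨b * W, fun k hk => ?_⟩
    exact (Nat.le_div_iff_mul_le hWpos).2 hk
  · rw [Filter.tendsto_atTop]
    intro b
    rw [Filter.eventually_atTop]
    refine ⟨2 * b + r.natAbs + 2, fun l hl => ?_⟩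
    omega
  · intro k
    rw [hP, hQ]
    refine Submodule.span_le.2 ?_
    rintro f ⟨d, h1, h2, rfl⟩
    refine Submodule.subset_span ⟨d, h1, ?_, rfl⟩
    -- positive part ≤ W * total degree
    have hb : (k : ℤ) ≤ (W : ℤ) * (∑ s, (d s : ℤ)) := by
      refine h2.trans ?_
      calc (∑ s ∈ Finset.univ.filter (fun s => 0 < w s), w s * (d s : ℤ))
          ≤ ∑ s ∈ Finset.univ.filter (fun s => 0 < w s), (W : ℤ) * (d s : ℤ) := by
            refine Finset.sum_le_sum fun s hs => ?_
            have h1 : w s ≤ (W : ℤ) := by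
              have := hWbound s
              omega
            have : (0:ℤ) ≤ (d s : ℤ) := Int.natCast_nonneg _
            nlinarith
        _ ≤ ∑ s, (W : ℤ) * (d s : ℤ) := by
            refine Finset.sum_le_sum_of_subset_of_nonneg (Finset.filter_subset _ _) ?_
            intro s _ _
            positivity
        _ = (W : ℤ) * (∑ s, (d s : ℤ)) := by rw [Finset.mul_sum]
    have hb' : k ≤ W * (∑ s, d s) := by exact_mod_cast hb
    calc k / W ≤ (W * (∑ s, d s)) / W := Nat.div_le_div_right hb'
      _ = ∑ s, d s := Nat.mul_div_cancel_left _ hWpos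
  · intro l
    rw [hP, hQ]
    refine Submodule.span_le.2 ?_
    rintro f ⟨d, h1, h2, rfl⟩
    refine Submodule.subset_span ⟨d, h1, ?_, rfl⟩
    set Pplus : ℤ := ∑ s ∈ Finset.univ.filter (fun s => 0 < w s), w s * (d s : ℤ) with hPp
    have hPnonneg : 0 ≤ Pplus := by
      refine Finset.sum_nonneg fun s hs => ?_
      have := (Finset.mem_filter.1 hs).2
      positivity
    -- total degree ≤ 2 * Pplus - r
    have hdeg : (∑ s, (d s : ℤ)) ≤ 2 * Pplus - r := by
      have hsplit : r = Pplus + ∑ s ∈ Finset.univ.filter (fun s => ¬ 0 < w s),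
          w s * (d s : ℤ) := by
        rw [hPp, ← h1, ← Finset.sum_filter_add_sum_filter_not Finset.univ (fun s => 0 < w s)]
      have h3 : (∑ s, (d s : ℤ)) =
          (∑ s ∈ Finset.univ.filter (fun s => 0 < w s), (d s : ℤ)) +
          (∑ s ∈ Finset.univ.filter (fun s => ¬ 0 < w s), (d s : ℤ)) :=
        (Finset.sum_filter_add_sum_filter_not Finset.univ (fun s => 0 < w s) _).symm
      have h4 : (∑ s ∈ Finset.univ.filter (fun s => 0 < w s), (d s : ℤ)) ≤ Pplus := by
        refine Finset.sum_le_sum fun s hs => ?_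
        have hws := (Finset.mem_filter.1 hs).2
        nlinarith [Int.natCast_nonneg (d s)]
      have h5 : (∑ s ∈ Finset.univ.filter (fun s => ¬ 0 < w s), (d s : ℤ)) ≤
          -(∑ s ∈ Finset.univ.filter (fun s => ¬ 0 < w s), w s * (d s : ℤ)) := by
        rw [← Finset.sum_neg_distrib]
        refine Finset.sum_le_sum fun s hs => ?_
        have hws := (Finset.mem_filter.1 hs).2
        have : w s ≤ -1 := by have := hw s; omega
        nlinarith [Int.natCast_nonneg (d s)]
      omega
    have hl : (l : ℤ) ≤ ∑ s, (d s : ℤ) := by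
      have : (l : ℤ) ≤ ((∑ s, d s : ℕ) : ℤ) := by exact_mod_cast h2
      simpa using this
    beta_reduce
    omega
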